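/- (Lemma 7) Let S be a nonempty string over Σ of length x, and let P = {p ∈ [1,n] : S is a prefix of suffix(p)} be nonempty, with p + x ≤ n for every p ∈ P. Enumerate P as p₁, p₂, …, p_m so that suffix(p₁+x) ≺ suffix(p₂+x) ≺ ⋯ ≺ suffix(p_m+x) (possible since all suffixes are pairwise distinct). Then there exists an integer r such that rank(p_o) = r + o − 1 for every o ∈ [1,m], and BWT[r+o−1] = T[p_o − 1] for every o ∈ [1,m]. In words: the suffixes prefixed by S occupy a consecutive interval of ranks, within this interval they appear sorted by their right contexts, and the corresponding BWT range is obtained by listing the symbols preceding the occurrences of S in that order. -/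

import Mathlib

/-- Auxiliary S-type classification with explicit fuel `n - i`. -/
def STypeAux {α : Type*} [LinearOrder α] (T : ℕ → α) : ℕ → ℕ → Prop
  | 0, _ => True
  | k + 1, i => T i < T (i + 1) ∨ (T i = T (i + 1) ∧ STypeAux T k (i + 1))

/-- Position `i` of `T[1..n]` is S-type. -/
def SType {α : Type*} [LinearOrder α] (T : ℕ → α) (n i : ℕ) : Prop :=
  STypeAux T (n - i) i

/-- Auxiliary L-type classification with explicit fuel `n - i`. -/
def LTypeAux {α : Type*} [LinearOrder α] (T : ℕ → α) : ℕ → ℕ → Prop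
  | 0, _ => False
  | k + 1, i => T (i + 1) < T i ∨ (T i = T (i + 1) ∧ LTypeAux T k (i + 1))

/-- Position `i` of `T[1..n]` is L-type. -/
def LType {α : Type*} [LinearOrder α] (T : ℕ → α) (n i : ℕ) : Prop :=
  LTypeAux T (n - i) i

/-- Position `i` of `T[1..n]` is LMS-type. -/
def LMSType {α : Type*} [LinearOrder α] (T : ℕ → α) (n i : ℕ) : Prop :=
  1 < i ∧ SType T n i ∧ LType T n (i - 1)

/-- `suf T n i` is the suffix `T[i..n]` of `T[1..n]` as a list. -/
def suf {α : Type*} (T : ℕ → α) (n i : ℕ) : List α :=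
  (List.range (n + 1 - i)).map fun k => T (i + k)

/-- rank of suffix p among all suffixes of T[1..n]. -/
noncomputable def rnk {α : Type*} [LinearOrder α] (T : ℕ → α) (n p : ℕ) : ℕ :=
  1 + Set.ncard {q : ℕ | 1 ≤ q ∧ q ≤ n ∧ List.Lex (· < ·) (suf T n q) (suf T n p)}

/-- `p` is an LMS-suffix occurrence of string `S` (|S| ≥ 2) in `T[1..n]`. -/
def IsLMSSuffixOcc {α : Type*} [LinearOrder α] (T : ℕ → α) (n : ℕ) (S : List α) (p : ℕ) : Prop :=
  1 ≤ p ∧ p + S.length - 1 ≤ n ∧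
    ((List.range S.length).map fun k => T (p + k)) = S ∧
    LMSType T n (p + S.length - 1) ∧
    ∀ k, p < k → k < p + S.length - 1 → ¬ LMSType T n k

section helpers
variable {α : Type*} [LinearOrder α]

lemma lex_append_iff (S a b : List α) :
    List.Lex (· < ·) (S ++ a) (S ++ b) ↔ List.Lex (· < ·) a b := by
  induction S with
  | nil => rfl
  | cons c S ih =>
    constructor
    · intro h
      cases h with
      | cons h => exact ih.1 h
      | rel h => exact absurd h (lt_irrefl c)
    · intro h
      exact List.Lex.cons (ih.2 h)

lemma prefix_of_between {S : List α} : ∀ {u a b : List α},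
    List.Lex (· < ·) (S ++ a) u → List.Lex (· < ·) u (S ++ b) → S <+: u := by
  induction S with
  | nil => intro u a b _ _; exact List.nil_prefix
  | cons c S ih =>
    intro u a b h1 h2
    cases h1 with
    | cons h1' =>
      cases h2 with
      | cons h2' => exact List.prefix_cons_inj c |>.mpr (ih h1' h2')
      | rel h => exact absurd h (lt_irrefl c)
    | rel h =>
      cases h2 with
      | cons _ => exact absurd h (lt_irrefl c)
      | rel h' => exact absurd (h.trans h') (lt_irrefl c)

lemma suf_length (T : ℕ → α) (n p : ℕ) : (suf T n p).length = n + 1 - p := by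
  simp [suf]

lemma suf_split (T : ℕ → α) (n p x : ℕ) (h : p + x ≤ n) :
    suf T n p = ((List.range x).map fun k => T (p + k)) ++ suf T n (p + x) := by
  unfold suf
  have hsum : n + 1 - p = x + (n + 1 - (p + x)) := by omega
  rw [hsum, List.range_add, List.map_append, List.map_map]
  congr 1
  apply List.map_congr_left
  intro k _
  simp [Function.comp, Nat.add_assoc]

lemma suf_inj (T : ℕ → α) (n p q : ℕ) (hp : p ≤ n) (hq : q ≤ n)
    (h : suf T n p = suf T n q) : p = q := by
  have := congrArg List.length h
  rw [suf_length, suf_length] at this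
  omega

end helpers


/-- Lemma 7: let `S` be nonempty of length `x`, and let
`p₁, …, p_m` enumerate the positions whose suffix is prefixed by `S`, sorted by
the right contexts `suffix(pₒ + x)`. Then the ranks `rank(pₒ)` form a consecutive
interval `r, r+1, …, r+m-1` in that order, and `BWT[r+o-1] = T[pₒ - 1]`. -/
theorem stmt13 {α : Type*} [LinearOrder α] (T : ℕ → α) (n : ℕ) (sent : α)
    (hn : 2 ≤ n) (hTn : T n = sent) (hT0 : T 0 = sent)
    (hsent : ∀ a : α, a ≠ sent → sent < a)
    (hT : ∀ i, 1 ≤ i → i < n → T i ≠ sent)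
    -- the suffix array is the inverse of rank, and BWT k = T (SA k - 1):
    (SA : ℕ → ℕ) (hSA : ∀ p, 1 ≤ p → p ≤ n → SA (rnk T n p) = p)
    (bwt : ℕ → α) (hbwt : ∀ k, 1 ≤ k → k ≤ n → bwt k = T (SA k - 1))
    -- S, its occurrences, and their enumeration sorted by right context:
    (S : List α) (hS : S ≠ []) (x : ℕ) (hx : x = S.length)
    (m : ℕ) (hm : 1 ≤ m) (e : ℕ → ℕ)
    (he : ∀ p, (1 ≤ p ∧ p ≤ n ∧ S <+: suf T n p) ↔ ∃ o, 1 ≤ o ∧ o ≤ m ∧ e o = p)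
    (hinj : ∀ o o', 1 ≤ o → o ≤ m → 1 ≤ o' → o' ≤ m → e o = e o' → o = o')
    (hbound : ∀ o, 1 ≤ o → o ≤ m → e o + x ≤ n)
    (hsorted : ∀ o, 1 ≤ o → o < m →
      List.Lex (· < ·) (suf T n (e o + x)) (suf T n (e (o + 1) + x))) :
    ∃ r : ℕ, ∀ o, 1 ≤ o → o ≤ m →
      rnk T n (e o) = r + o - 1 ∧ bwt (r + o - 1) = T (e o - 1) := by
  classical
  -- basic facts about occurrences
  have hocc : ∀ o, 1 ≤ o → o ≤ m → 1 ≤ e o ∧ e o ≤ n ∧ S <+: suf T n (e o) :=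
    fun o h1 h2 => (he (e o)).2 ⟨o, h1, h2, rfl⟩
  -- each occurrence suffix splits as S ++ (right context)
  have hsplit : ∀ o, 1 ≤ o → o ≤ m → suf T n (e o) = S ++ suf T n (e o + x) := by
    intro o h1 h2
    have hb := hbound o h1 h2
    have hsp := suf_split T n (e o) x hb
    obtain ⟨t, ht⟩ := (hocc o h1 h2).2.2
    have heq : S ++ t = ((List.range x).map fun k => T (e o + k)) ++ suf T n (e o + x) :=
      ht.trans hsp
    have hlen : S.length = ((List.range x).map fun k => T (e o + k)).length := by
      simp [hx]
    have := List.append_inj heq hlen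
    rw [hsp, ← this.1]
  -- right contexts are strictly increasing
  have hctx : ∀ k, k ≤ m → ∀ j, 1 ≤ j → j < k →
      List.Lex (· < ·) (suf T n (e j + x)) (suf T n (e k + x)) := by
    intro k
    induction k with
    | zero => omega
    | succ k ih =>
      intro hk j hj hjk
      have hk1 : 1 ≤ k := by omega
      have hstep : List.Lex (· < ·) (suf T n (e k + x)) (suf T n (e (k + 1) + x)) :=
        hsorted k hk1 (by omega)
      rcases Nat.lt_succ_iff_lt_or_eq.mp hjk with h | h
      · exact lt_trans (show suf T n (e j + x) < suf T n (e k + x) from ih (by omega) j hj h)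
          (show suf T n (e k + x) < suf T n (e (k + 1) + x) from hstep)
      · rw [h]; exact hstep
  -- occurrence suffixes strictly increasing
  have hmono : ∀ j k, 1 ≤ j → k ≤ m → j < k →
      List.Lex (· < ·) (suf T n (e j)) (suf T n (e k)) := by
    intro j k hj hk hjk
    rw [hsplit j hj (by omega), hsplit k (by omega) hk, lex_append_iff]
    exact hctx k hk j hj hjk
  -- the comparison sets
  set A : ℕ → Set ℕ :=
    fun p => {q : ℕ | 1 ≤ q ∧ q ≤ n ∧ List.Lex (· < ·) (suf T n q) (suf T n p)} with hA
  have hAfin : ∀ p, (A p).Finite := by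
    intro p
    apply (Set.finite_Icc 1 n).subset
    intro q hq
    exact ⟨hq.1, hq.2.1⟩
  have hrnk : ∀ p, rnk T n p = 1 + (A p).ncard := fun p => rfl
  have hnotmem : ∀ o, 1 ≤ o → o ≤ m → e o ∉ A (e o) := by
    intro o h1 h2 hmem
    exact lt_irrefl _ (show suf T n (e o) < suf T n (e o) from hmem.2.2)
  -- step: A (e (o+1)) = insert (e o) (A (e o))
  have hstep : ∀ o, 1 ≤ o → o + 1 ≤ m → A (e (o + 1)) = insert (e o) (A (e o)) := by
    intro o h1 h2
    have heo := hocc o h1 (by omega)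
    ext q
    constructor
    · rintro ⟨hq1, hqn, hlex⟩
      rcases lt_trichotomy (suf T n q) (suf T n (e o)) with h | h | h
      · exact Set.mem_insert_of_mem _ ⟨hq1, hqn, h⟩
      · have : q = e o := suf_inj T n q (e o) hqn heo.2.1 h
        exact this ▸ Set.mem_insert _ _
      · -- between: S is a prefix of suf q
        exfalso
        have hb1 : List.Lex (· < ·) (S ++ suf T n (e o + x)) (suf T n q) := by
          rw [← hsplit o h1 (by omega)]; exact h
        have hb2 : List.Lex (· < ·) (suf T n q) (S ++ suf T n (e (o + 1) + x)) := by
          rw [← hsplit (o + 1) (by omega) h2]; exact hlex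
        have hpre : S <+: suf T n q := prefix_of_between hb1 hb2
        obtain ⟨o', ho'1, ho'm, ho'e⟩ := (he q).1 ⟨hq1, hqn, hpre⟩
        -- o < o' since suf (e o) < suf (e o') = suf q
        have h1' : o < o' := by
          by_contra hcon
          push_neg at hcon
          rcases Nat.lt_or_ge o' o with hc | hc
          · have hmm := hmono o' o ho'1 (by omega) hc
            rw [ho'e] at hmm
            exact lt_irrefl _ (lt_trans h (show suf T n q < suf T n (e o) from hmm))
          · have heq : o = o' := by omega
            rw [heq, ho'e] at h
            exact lt_irrefl _ h
        have h2' : o' < o + 1 := by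
          by_contra hcon
          push_neg at hcon
          rcases Nat.lt_or_ge (o + 1) o' with hc | hc
          · have hmm := hmono (o + 1) o' (by omega) ho'm hc
            exact lt_irrefl _ (lt_trans
              (show suf T n q < suf T n (e (o + 1)) from hlex)
              (show suf T n (e (o + 1)) < suf T n q from ho'e ▸ hmm))
          · have heq : o' = o + 1 := by omega
            rw [heq] at ho'e
            rw [← ho'e] at hlex
            exact lt_irrefl (suf T n (e (o + 1))) hlex
        omega
    · intro hq
      rcases Set.mem_insert_iff.mp hq with h | h
      · subst h
        exact ⟨heo.1, heo.2.1, hmono o (o + 1) h1 h2 (by omega)⟩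
      · obtain ⟨hq1, hqn, hlex⟩ := h
        exact ⟨hq1, hqn, lt_trans (show suf T n q < suf T n (e o) from hlex)
          (show suf T n (e o) < suf T n (e (o + 1)) from hmono o (o + 1) h1 h2 (by omega))⟩
  -- consecutive ranks
  have hcons : ∀ o, 1 ≤ o → o + 1 ≤ m → rnk T n (e (o + 1)) = rnk T n (e o) + 1 := by
    intro o h1 h2
    rw [hrnk, hrnk, hstep o h1 h2,
      Set.ncard_insert_of_notMem (hnotmem o h1 (by omega)) (hAfin _)]
    omega
  have hchain : ∀ j, 1 + j ≤ m → rnk T n (e (1 + j)) = rnk T n (e 1) + j := by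
    intro j
    induction j with
    | zero => simp
    | succ j ih =>
      intro hj
      have h1j : 1 + (j + 1) = (1 + j) + 1 := by omega
      rw [h1j, hcons (1 + j) (by omega) (by omega), ih (by omega)]
      omega
  -- rank bounds
  have hrnk_le : ∀ o, 1 ≤ o → o ≤ m → rnk T n (e o) ≤ n := by
    intro o h1 h2
    have hsub : A (e o) ⊆ Set.Icc 1 n \ {e o} := by
      intro q hq
      refine ⟨⟨hq.1, hq.2.1⟩, ?_⟩
      intro hqe
      rw [Set.mem_singleton_iff] at hqe
      exact hnotmem o h1 h2 (hqe ▸ hq)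
    have hfin : (Set.Icc 1 n \ {e o}).Finite := (Set.finite_Icc 1 n).diff
    have hcard : (Set.Icc 1 n \ {e o}).ncard = n - 1 := by
      have hmem : e o ∈ Set.Icc 1 n := ⟨(hocc o h1 h2).1, (hocc o h1 h2).2.1⟩
      rw [Set.ncard_diff_singleton_of_mem hmem]
      rw [← Finset.coe_Icc, Set.ncard_coe_finset, Nat.card_Icc]
      omega
    have := Set.ncard_le_ncard hsub hfin
    rw [hcard] at this
    rw [hrnk]
    omega
  have hrnk_ge : ∀ p, 1 ≤ rnk T n p := fun p => by rw [rnk]; omega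
  -- conclusion
  refine ⟨rnk T n (e 1), ?_⟩
  intro o h1 h2
  have hval : rnk T n (e o) = rnk T n (e 1) + o - 1 := by
    have := hchain (o - 1) (by omega)
    have ho : 1 + (o - 1) = o := by omega
    rw [ho] at this
    have := hrnk_ge (e 1)
    omega
  refine ⟨hval, ?_⟩
  rw [← hval, hbwt _ (hrnk_ge _) (hrnk_le o h1 h2),
    hSA (e o) (hocc o h1 h2).1 (hocc o h1 h2).2.1]
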